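/- Let ε ∈ ℝ, γ > 0, L ∈ ℝ, T > 0, λ ∈ (0,1), c_U > 0 and c_X > 0. Let v, w, φ : [0,T] → ℝ be differentiable and h : [0,T] → ℝ with v ≥ 0, w ≥ 0, φ ≥ 0 on [0,T], satisfying (i) v'(t) ≤ −ε v(t) − h(t)² + γ² w(t)², (ii) (w²)'(t) ≤ 2L w(t)² + 2 h(t) w(t), and (iii) φ'(t) = −2(L + ε/2) φ(t) − γ (φ(t)² + 1) on [0,T]; assume γ φ(T) ≥ λ² c_U and max{1, e^{−εT}} · (v(0) + γ φ(0) w(0)²) < c_X. Set u(t) := v(t) + γ φ(t) w(t)². Then: (a) u(t) ≤ e^{−εt} u(0) for all t ∈ [0,T]; (b) for every w⁺ ≥ 0 with w⁺ ≤ λ w(T), v(T) + c_U (w⁺)² ≤ e^{−εT} u(0); and (c) v(t) < c_X for all t ∈ [0,T]. (This is a single-trajectory, single-mode reformulation of Proposition 2.1: decrease estimate (12), post-jump estimate (13), and invariance of the sublevel set X.) -/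

import Mathlib

/-- Single-trajectory, single-mode reformulation of Proposition 2.1: under the flow
conditions (i)–(iii) on `[0,T]`, the transition condition `γφ(T) ≥ λ²c_U`, and
`max{1, e^{−εT}}(v(0)+γφ(0)w(0)²) < c_X`, the function `u = v + γφw²` satisfies
(a) the decrease estimate (12) `u(t) ≤ e^{−εt}u(0)` on `[0,T]`,
(b) the post-jump estimate (13) `v(T) + c_U (w⁺)² ≤ e^{−εT}u(0)` for any
    `0 ≤ w⁺ ≤ λ w(T)`, and
(c) invariance of the sublevel set: `v(t) < c_X` on `[0,T]`. -/
theorem stmt_12 (ε γ L T lam cU cX : ℝ) (hγ : 0 < γ) (hT : 0 < T)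
    (hlam : lam ∈ Set.Ioo (0 : ℝ) 1) (hcU : 0 < cU) (hcX : 0 < cX)
    (v w φ h v' w' φ' : ℝ → ℝ)
    (hvd : ∀ t ∈ Set.Icc 0 T, HasDerivAt v (v' t) t)
    (hwd : ∀ t ∈ Set.Icc 0 T, HasDerivAt w (w' t) t)
    (hφd : ∀ t ∈ Set.Icc 0 T, HasDerivAt φ (φ' t) t)
    (hv0 : ∀ t ∈ Set.Icc 0 T, 0 ≤ v t)
    (hw0 : ∀ t ∈ Set.Icc 0 T, 0 ≤ w t)
    (hφ0 : ∀ t ∈ Set.Icc 0 T, 0 ≤ φ t)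
    (hi : ∀ t ∈ Set.Icc 0 T, v' t ≤ -ε * v t - (h t) ^ 2 + γ ^ 2 * (w t) ^ 2)
    (hii : ∀ t ∈ Set.Icc 0 T, 2 * w t * w' t ≤ 2 * L * (w t) ^ 2 + 2 * h t * w t)
    (hiii : ∀ t ∈ Set.Icc 0 T, φ' t = -2 * (L + ε / 2) * φ t - γ * ((φ t) ^ 2 + 1))
    (htrans : lam ^ 2 * cU ≤ γ * φ T)
    (hset : max 1 (Real.exp (-ε * T)) * (v 0 + γ * φ 0 * (w 0) ^ 2) < cX) :
    (∀ t ∈ Set.Icc 0 T,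
        v t + γ * φ t * (w t) ^ 2
          ≤ Real.exp (-ε * t) * (v 0 + γ * φ 0 * (w 0) ^ 2)) ∧
    (∀ wplus : ℝ, 0 ≤ wplus → wplus ≤ lam * w T →
        v T + cU * wplus ^ 2
          ≤ Real.exp (-ε * T) * (v 0 + γ * φ 0 * (w 0) ^ 2)) ∧
    (∀ t ∈ Set.Icc 0 T, v t < cX) := by
  set u : ℝ → ℝ := fun t => v t + γ * φ t * (w t) ^ 2 with hu
  set u' : ℝ → ℝ := fun t => v' t + γ * (φ' t * (w t) ^ 2 + φ t * (2 * w t * w' t)) with hu'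
  have hud : ∀ t ∈ Set.Icc 0 T, HasDerivAt u (u' t) t := by
    intro t ht
    have h1 : HasDerivAt (fun s => (w s) ^ 2) (2 * w t * w' t) t := by
      have := (hwd t ht).fun_pow 2
      simpa [mul_comm, mul_assoc, mul_left_comm] using this
    have h2 : HasDerivAt (fun s => φ s * (w s) ^ 2)
        (φ' t * (w t) ^ 2 + φ t * (2 * w t * w' t)) t := (hφd t ht).mul h1
    simpa [hu, hu', mul_assoc] using (hvd t ht).fun_add (h2.const_mul γ)
  have hkey : ∀ t ∈ Set.Icc 0 T, u' t ≤ -ε * u t := by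
    intro t ht
    have h1 := hi t ht
    have h2 := hii t ht
    have h3 := hiii t ht
    have hφt := hφ0 t ht
    have h4 : γ * φ t * (2 * w t * w' t) ≤ γ * φ t * (2 * L * (w t) ^ 2 + 2 * h t * w t) := by
      apply mul_le_mul_of_nonneg_left h2 (by positivity)
    have h5 : γ * (φ' t * (w t) ^ 2) = γ * (w t) ^ 2 * (-2 * (L + ε / 2) * φ t - γ * ((φ t) ^ 2 + 1)) := by
      rw [h3]; ring
    simp only [hu, hu']
    nlinarith [sq_nonneg (h t - γ * φ t * w t)]
  have hcont : ContinuousOn u (Set.Icc 0 T) := fun t ht => ((hud t ht).continuousAt).continuousWithinAt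
  set g : ℝ → ℝ := fun t => Real.exp (ε * t) * u t with hg
  have hgd : ∀ t ∈ Set.Icc 0 T, HasDerivAt g (Real.exp (ε * t) * (ε * u t + u' t)) t := by
    intro t ht
    have he : HasDerivAt (fun s => Real.exp (ε * s)) (Real.exp (ε * t) * ε) t := by
      have := (Real.hasDerivAt_exp (ε * t)).comp t ((hasDerivAt_id t).const_mul ε)
      simpa [mul_comm, Function.comp_def] using this
    have := he.fun_mul (hud t ht)
    exact this.congr_deriv (by ring)
  have hanti : AntitoneOn g (Set.Icc 0 T) := by
    apply antitoneOn_of_deriv_nonpos (convex_Icc 0 T)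
    · exact fun t ht => ((hgd t ht).continuousAt).continuousWithinAt
    · intro t ht
      rw [interior_Icc] at ht
      exact ((hgd t (Set.mem_Icc_of_Ioo ht)).differentiableAt).differentiableWithinAt
    · intro t ht
      rw [interior_Icc] at ht
      have ht' := Set.mem_Icc_of_Ioo ht
      rw [(hgd t ht').deriv]
      have := hkey t ht'
      nlinarith [Real.exp_pos (ε * t), mul_le_mul_of_nonneg_left this (Real.exp_pos (ε * t)).le]
  have hu0 : 0 ≤ u 0 := by
    have := hv0 0 (Set.left_mem_Icc.2 hT.le)
    have := hφ0 0 (Set.left_mem_Icc.2 hT.le)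
    positivity
  have ha : ∀ t ∈ Set.Icc 0 T, u t ≤ Real.exp (-ε * t) * u 0 := by
    intro t ht
    have h0 : (0 : ℝ) ∈ Set.Icc 0 T := Set.left_mem_Icc.2 hT.le
    have := hanti h0 ht ht.1
    simp only [hg, mul_zero, Real.exp_zero, one_mul] at this
    have hep := Real.exp_pos (ε * t)
    rw [neg_mul, Real.exp_neg, inv_mul_eq_div, le_div_iff₀ hep]
    linarith [this, mul_comm (u t) (Real.exp (ε * t))]
  refine ⟨ha, ?_, ?_⟩
  · intro wplus hwp1 hwp2
    have hTm : T ∈ Set.Icc 0 T := Set.right_mem_Icc.2 hT.le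
    have hwT := hw0 T hTm
    have h1 : cU * wplus ^ 2 ≤ γ * φ T * (w T) ^ 2 := by
      have h2 : wplus ^ 2 ≤ lam ^ 2 * (w T) ^ 2 := by nlinarith
      nlinarith [mul_le_mul_of_nonneg_right htrans (sq_nonneg (w T))]
    have := ha T hTm
    simp only [hu] at this
    linarith
  · intro t ht
    have h1 : v t ≤ u t := by
      have hφt := hφ0 t ht
      have hp : 0 ≤ γ * φ t * (w t) ^ 2 := by positivity
      simp only [hu]
      linarith
    have h2 : Real.exp (-ε * t) ≤ max 1 (Real.exp (-ε * T)) := by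
      rcases le_or_gt 0 ε with hε | hε
      · exact le_max_of_le_left (Real.exp_le_one_iff.2 (by nlinarith [ht.1]))
      · exact le_max_of_le_right (Real.exp_le_exp.2 (by nlinarith [ht.2]))
    have h3 : Real.exp (-ε * t) * u 0 ≤ max 1 (Real.exp (-ε * T)) * u 0 :=
      mul_le_mul_of_nonneg_right h2 hu0
    have := ha t ht
    simp only [hu] at *
    linarith
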